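/- There are exactly 31 subloops of T_L of cardinality 32. -/

import Mathlib

/-- Iterated Cayley–Dickson doubling starting from `ℝ`. -/
def CD : ℕ → Type
  | 0 => ℝ
  | n + 1 => CD n × CD n

instance cdAddCommGroup : ∀ n, AddCommGroup (CD n)
  | 0 => inferInstanceAs (AddCommGroup ℝ)
  | n + 1 => letI := cdAddCommGroup n; inferInstanceAs (AddCommGroup (CD n × CD n))

noncomputable instance cdModule : ∀ n, Module ℝ (CD n)
  | 0 => inferInstanceAs (Module ℝ ℝ)
  | n + 1 => letI := cdModule n; inferInstanceAs (Module ℝ (CD n × CD n))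

/-- Cayley–Dickson conjugation, starting from the identity on `ℝ`. -/
def cdConj : ∀ n, CD n → CD n
  | 0, x => x
  | n + 1, x => (cdConj n x.1, -x.2)

/-- Cayley–Dickson multiplication: `(a,b)(c,d) = (ac − d b̄, ā d + c b)`. -/
def cdMul : ∀ n, CD n → CD n → CD n
  | 0, x, y => @Mul.mul ℝ _ x y
  | n + 1, x, y =>
      (cdMul n x.1 y.1 - cdMul n y.2 (cdConj n x.2),
       cdMul n (cdConj n x.1) y.2 + cdMul n y.1 x.2)

instance cdMulInst (n : ℕ) : Mul (CD n) := ⟨cdMul n⟩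

instance cdOne : ∀ n, One (CD n)
  | 0 => ⟨(1 : ℝ)⟩
  | n + 1 => letI := cdOne n; ⟨((1 : CD n), 0)⟩

/-- The standard basis elements: under a doubling step `A → A × A`, a basis element
`e k` of `A` gives `e k = (e k, 0)` and `e (k + dim A) = (0, e k)`. -/
def cdE : ∀ n, ℕ → CD n
  | 0, _ => (1 : ℝ)
  | n + 1, k => if k < 2 ^ n then (cdE n k, 0) else (0, cdE n (k - 2 ^ n))

/-- The trigintaduonions: the 32-dimensional real Cayley–Dickson algebra. -/
abbrev TT := CD 5

/-- The 32 standard basis elements `e 0 = 1, e 1, …, e 31` of `𝕋`. -/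
def e (i : ℕ) : TT := cdE 5 i

/-- The trigintaduonion loop `T_L = {±e 0, ±e 1, …, ±e 31}`. -/
def TL : Set TT := {x | ∃ i < 32, x = e i ∨ x = -e i}

/-- A subloop of `T_L`: a nonempty subset of `T_L` closed under multiplication. -/
def IsSubloop (N : Set TT) : Prop :=
  N ⊆ TL ∧ N.Nonempty ∧ ∀ x ∈ N, ∀ y ∈ N, x * y ∈ N

/-- Two subsets of `T_L` are isomorphic (as loops) if some bijection between them
preserves multiplication. -/
def LoopIso (A B : Set TT) : Prop :=
  ∃ f : TT → TT, Set.BijOn f A B ∧ ∀ x ∈ A, ∀ y ∈ A, f (x * y) = f x * f y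


-- component lemmas
lemma cd_zero_def (n : ℕ) : (0 : CD (n+1)) = ((0 : CD n), (0 : CD n)) := rfl
lemma cd_one_def (n : ℕ) : (1 : CD (n+1)) = ((1 : CD n), (0 : CD n)) := rfl
lemma cd_neg_def (n : ℕ) (x : CD (n+1)) : -x = (-x.1, -x.2) := rfl
lemma cd_neg_mk (n : ℕ) (a b : CD n) : -((a, b) : CD (n+1)) = (-a, -b) := rfl
lemma cd_mk_eq_mk {n : ℕ} {a b c d : CD n} :
    ((a, b) : CD (n+1)) = ((c, d) : CD (n+1)) ↔ a = c ∧ b = d := Prod.ext_iff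
lemma cdMul_def (n : ℕ) (x y : CD (n+1)) :
    cdMul (n+1) x y = (cdMul n x.1 y.1 - cdMul n y.2 (cdConj n x.2),
      cdMul n (cdConj n x.1) y.2 + cdMul n y.1 x.2) := rfl
lemma cdMul_mk (n : ℕ) (a b c d : CD n) :
    cdMul (n+1) (a, b) (c, d) = (cdMul n a c - cdMul n d (cdConj n b),
      cdMul n (cdConj n a) d + cdMul n c b) := rfl
lemma cdConj_mk (n : ℕ) (a b : CD n) : cdConj (n+1) (a, b) = (cdConj n a, -b) := rfl

lemma cdE_low {n k : ℕ} (h : k < 2 ^ n) : cdE (n+1) k = ((cdE n k, 0) : CD (n+1)) := by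
  simp [cdE, h]; rfl
lemma cdE_high {n k : ℕ} (h : ¬ k < 2 ^ n) :
    cdE (n+1) k = ((0, cdE n (k - 2 ^ n)) : CD (n+1)) := by
  simp [cdE, h]; rfl

lemma cdConj_zero : ∀ n, cdConj n (0 : CD n) = 0
  | 0 => rfl
  | n + 1 => by
      rw [cd_zero_def, cdConj_mk, cdConj_zero n, neg_zero]

lemma cdConj_one : ∀ n, cdConj n (1 : CD n) = 1
  | 0 => rfl
  | n + 1 => by
      rw [cd_one_def, cdConj_mk, cdConj_one n, neg_zero]

lemma cdConj_neg : ∀ n (x : CD n), cdConj n (-x) = -cdConj n x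
  | 0, x => rfl
  | n + 1, x => by
      erw [cd_neg_def, cdConj_mk, cdConj_neg n, show cdConj (n+1) x = (cdConj n x.1, -x.2) from rfl,
        cd_neg_mk, neg_neg]

lemma cdMul_zero_zero : ∀ n, (∀ x : CD n, cdMul n x 0 = 0) ∧ (∀ x : CD n, cdMul n 0 x = 0)
  | 0 => ⟨fun x => @mul_zero ℝ _ x, fun x => @zero_mul ℝ _ x⟩
  | n + 1 => by
      obtain ⟨hr, hl⟩ := cdMul_zero_zero n
      constructor
      · intro x
        erw [cd_zero_def, cdMul_def]
        show ((cdMul n x.1 0 - cdMul n 0 (cdConj n x.2),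
            cdMul n (cdConj n x.1) 0 + cdMul n 0 x.2) : CD (n+1)) = 0
        erw [hr _, hl _, hr _, hl _, sub_zero, add_zero, cd_zero_def]
      · intro x
        erw [cd_zero_def, cdMul_def]
        show ((cdMul n 0 x.1 - cdMul n x.2 (cdConj n 0),
            cdMul n (cdConj n 0) x.2 + cdMul n x.1 0) : CD (n+1)) = 0
        erw [cdConj_zero, hl _, hr _, hl _, hr _, sub_zero, add_zero, cd_zero_def]

lemma cdMul_zero (n : ℕ) (x : CD n) : cdMul n x 0 = 0 := (cdMul_zero_zero n).1 x
lemma zero_cdMul (n : ℕ) (x : CD n) : cdMul n 0 x = 0 := (cdMul_zero_zero n).2 x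

lemma cdMul_neg : ∀ n, (∀ x y : CD n, cdMul n (-x) y = -cdMul n x y) ∧
    (∀ x y : CD n, cdMul n x (-y) = -cdMul n x y)
  | 0 => ⟨fun x y => show @Mul.mul ℝ _ (-x) y = -(@Mul.mul ℝ _ x y) from neg_mul _ _,
      fun x y => show @Mul.mul ℝ _ x (-y) = -(@Mul.mul ℝ _ x y) from mul_neg _ _⟩
  | n + 1 => by
      obtain ⟨hl, hr⟩ := cdMul_neg n
      constructor
      · intro x y
        erw [cd_neg_def, cdMul_def, cdMul_def, cd_neg_mk]
        show ((cdMul n (-x.1) y.1 - cdMul n y.2 (cdConj n (-x.2)),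
            cdMul n (cdConj n (-x.1)) y.2 + cdMul n y.1 (-x.2)) : CD (n+1)) = _
        rw [cdConj_neg, cdConj_neg, hl _ _, hr _ _, hl _ _, hr _ _]
        exact cd_mk_eq_mk.2 ⟨by abel, by abel⟩
      · intro x y
        erw [cd_neg_def, cdMul_def, cdMul_def, cd_neg_mk]
        show ((cdMul n x.1 (-y.1) - cdMul n (-y.2) (cdConj n x.2),
            cdMul n (cdConj n x.1) (-y.2) + cdMul n (-y.1) x.2) : CD (n+1)) = _
        rw [hr _ _, hl _ _, hr _ _, hl _ _]
        exact cd_mk_eq_mk.2 ⟨by abel, by abel⟩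

lemma cdMul_neg_left (n : ℕ) (x y : CD n) : cdMul n (-x) y = -cdMul n x y := (cdMul_neg n).1 x y
lemma cdMul_neg_right (n : ℕ) (x y : CD n) : cdMul n x (-y) = -cdMul n x y := (cdMul_neg n).2 x y

lemma cdOne_mul : ∀ n (x : CD n), cdMul n 1 x = x
  | 0, x => @one_mul ℝ _ x
  | n + 1, x => by
      erw [cd_one_def, cdMul_def]
      show ((cdMul n 1 x.1 - cdMul n x.2 (cdConj n 0),
          cdMul n (cdConj n 1) x.2 + cdMul n x.1 0) : CD (n+1)) = x
      rw [cdConj_zero, cdConj_one, cdMul_zero, cdMul_zero, cdOne_mul n, cdOne_mul n,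
        sub_zero, add_zero]
      exact Prod.mk.eta

lemma cdMul_one : ∀ n (x : CD n), cdMul n x 1 = x
  | 0, x => @mul_one ℝ _ x
  | n + 1, x => by
      erw [cd_one_def, cdMul_def]
      show ((cdMul n x.1 1 - cdMul n 0 (cdConj n x.2),
          cdMul n (cdConj n x.1) 0 + cdMul n 1 x.2) : CD (n+1)) = x
      rw [zero_cdMul, cdMul_zero, cdMul_one n, cdOne_mul n, sub_zero, zero_add]
      exact Prod.mk.eta

lemma cdE_zero_eq_one : ∀ n, cdE n 0 = 1
  | 0 => rfl
  | n + 1 => by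
      rw [cdE_low (Nat.pow_pos (a := 2) (n := n) (by norm_num)), cdE_zero_eq_one n, cd_one_def]

lemma cdE_ne_zero : ∀ n i, cdE n i ≠ 0
  | 0, i => by show (1 : ℝ) ≠ 0; norm_num
  | n + 1, i => by
      by_cases h : i < 2 ^ n
      · rw [cdE_low h, cd_zero_def]
        exact fun h' => cdE_ne_zero n i (cd_mk_eq_mk.1 h').1
      · rw [cdE_high h, cd_zero_def]
        exact fun h' => cdE_ne_zero n (i - 2 ^ n) (cd_mk_eq_mk.1 h').2

lemma cdE_ne_neg : ∀ n i j, cdE n i ≠ -cdE n j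
  | 0, i, j => by show (1 : ℝ) ≠ -1; norm_num
  | n + 1, i, j => by
      by_cases h1 : i < 2 ^ n <;> by_cases h2 : j < 2 ^ n
      · erw [cdE_low h1, cdE_low h2, cd_neg_mk]
        exact fun h => cdE_ne_neg n i j (cd_mk_eq_mk.1 h).1
      · erw [cdE_low h1, cdE_high h2, cd_neg_mk, neg_zero]
        exact fun h => cdE_ne_zero n i (by simpa using (cd_mk_eq_mk.1 h).1)
      · erw [cdE_high h1, cdE_low h2, cd_neg_mk, neg_zero]
        exact fun h => cdE_ne_zero n (i - 2 ^ n) (by simpa using (cd_mk_eq_mk.1 h).2)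
      · erw [cdE_high h1, cdE_high h2, cd_neg_mk, neg_zero]
        exact fun h => cdE_ne_neg n (i - 2 ^ n) (j - 2 ^ n) (cd_mk_eq_mk.1 h).2

lemma cdE_inj : ∀ n i j, i < 2 ^ n → j < 2 ^ n → cdE n i = cdE n j → i = j
  | 0, i, j, hi, hj, _ => by omega
  | n + 1, i, j, hi, hj, h => by
      rw [show (2:ℕ) ^ (n+1) = 2 ^ n + 2 ^ n by ring] at hi hj
      by_cases h1 : i < 2 ^ n <;> by_cases h2 : j < 2 ^ n
      · rw [cdE_low h1, cdE_low h2] at h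
        exact cdE_inj n i j h1 h2 (cd_mk_eq_mk.1 h).1
      · rw [cdE_low h1, cdE_high h2] at h
        exact absurd (cd_mk_eq_mk.1 h).1 (cdE_ne_zero n i)
      · rw [cdE_high h1, cdE_low h2] at h
        exact absurd (cd_mk_eq_mk.1 h).1.symm (cdE_ne_zero n j)
      · rw [cdE_high h1, cdE_high h2] at h
        have := cdE_inj n (i - 2 ^ n) (j - 2 ^ n) (by omega) (by omega) (cd_mk_eq_mk.1 h).2
        omega

-- Nat xor helper lemmas
lemma pow_add_eq_xor {n b : ℕ} (h : b < 2 ^ n) : 2 ^ n + b = 2 ^ n ^^^ b := by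
  apply Nat.eq_of_testBit_eq
  intro i
  rcases lt_trichotomy i n with hi | hi | hi
  · rw [Nat.testBit_xor, Nat.testBit_two_pow_add_gt hi, Nat.testBit_two_pow]
    simp [Nat.ne_of_gt hi]
  · subst hi
    rw [Nat.testBit_two_pow_add_eq, Nat.testBit_lt_two_pow h, Nat.testBit_xor,
      Nat.testBit_two_pow, Nat.testBit_lt_two_pow h]
    simp
  · have h2 : (2:ℕ) ^ n + b < 2 ^ i := by
      calc 2 ^ n + b < 2 ^ n + 2 ^ n := by omega
      _ = 2 ^ (n+1) := by ring
      _ ≤ 2 ^ i := Nat.pow_le_pow_right (by norm_num) (by omega)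
    rw [Nat.testBit_lt_two_pow h2, Nat.testBit_xor, Nat.testBit_two_pow,
      Nat.testBit_lt_two_pow (lt_trans h (Nat.pow_lt_pow_right (by norm_num) hi))]
    simp [Nat.ne_of_lt hi]

lemma xor_low_high {n a b : ℕ} (ha : a < 2 ^ n) (hb : b < 2 ^ n) :
    a ^^^ (2 ^ n + b) = 2 ^ n + (a ^^^ b) := by
  rw [pow_add_eq_xor hb, pow_add_eq_xor (Nat.xor_lt_two_pow ha hb)]
  rw [← Nat.xor_assoc, Nat.xor_comm a (2 ^ n), Nat.xor_assoc]

lemma xor_high_low {n a b : ℕ} (ha : a < 2 ^ n) (hb : b < 2 ^ n) :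
    (2 ^ n + a) ^^^ b = 2 ^ n + (a ^^^ b) := by
  rw [Nat.xor_comm, xor_low_high hb ha, Nat.xor_comm a b]

lemma xor_high_high {n a b : ℕ} (ha : a < 2 ^ n) (hb : b < 2 ^ n) :
    (2 ^ n + a) ^^^ (2 ^ n + b) = a ^^^ b := by
  rw [pow_add_eq_xor ha, pow_add_eq_xor hb]
  rw [← Nat.xor_assoc, Nat.xor_comm (2 ^ n ^^^ a) (2 ^ n), ← Nat.xor_assoc,
    Nat.xor_self, Nat.zero_xor]

-- conjugation of basis elements
lemma cdConj_E : ∀ n i, i ≠ 0 → i < 2 ^ n → cdConj n (cdE n i) = -cdE n i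
  | 0, i, hne, hlt => by omega
  | n + 1, i, hne, hlt => by
      by_cases h : i < 2 ^ n
      · erw [cdE_low h, cdConj_mk, cdConj_E n i hne h, neg_zero, cd_neg_mk, neg_zero]
      · erw [cdE_high h, cdConj_mk, cdConj_zero, cd_neg_mk, neg_zero]

lemma cdConj_E_pm (n i : ℕ) (hlt : i < 2 ^ n) :
    cdConj n (cdE n i) = cdE n i ∨ cdConj n (cdE n i) = -cdE n i := by
  by_cases h : i = 0
  · subst h; rw [cdE_zero_eq_one, cdConj_one]; exact Or.inl rfl
  · exact Or.inr (cdConj_E n i h hlt)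

/-- up to sign -/
def PM {n : ℕ} (x y : CD n) : Prop := x = y ∨ x = -y

lemma PM.neg_left {n : ℕ} {x y : CD n} (h : PM x y) : PM (-x) y := by
  rcases h with h | h
  · exact Or.inr (by rw [h])
  · exact Or.inl (by rw [h, neg_neg])

lemma PM.mk_fst {n : ℕ} {u v : CD n} (h : PM u v) :
    @PM (n+1) (u, (0:CD n)) (v, (0:CD n)) := by
  rcases h with h | h
  · exact Or.inl (by rw [h])
  · exact Or.inr (by erw [h, cd_neg_mk, neg_zero])

lemma PM.mk_snd {n : ℕ} {u v : CD n} (h : PM u v) :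
    @PM (n+1) ((0:CD n), u) ((0:CD n), v) := by
  rcases h with h | h
  · exact Or.inl (by rw [h])
  · exact Or.inr (by erw [h, cd_neg_mk, neg_zero])

lemma cdE_mul_E : ∀ n i j, i < 2 ^ n → j < 2 ^ n →
    PM (cdMul n (cdE n i) (cdE n j)) (cdE n (i ^^^ j))
  | 0, i, j, hi, hj => by
      interval_cases i
      interval_cases j
      exact Or.inl (show (1:ℝ) * 1 = 1 by norm_num)
  | n + 1, i, j, hi, hj => by
      rw [show (2:ℕ) ^ (n+1) = 2 ^ n + 2 ^ n by ring] at hi hj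
      by_cases h1 : i < 2 ^ n <;> by_cases h2 : j < 2 ^ n
      · -- both low
        have hx : i ^^^ j < 2 ^ n := Nat.xor_lt_two_pow h1 h2
        rw [cdE_low h1, cdE_low h2, cdE_low hx, cdMul_mk]
        simp only [cdMul_zero, zero_cdMul, cdConj_zero, sub_zero, zero_sub, zero_add, add_zero]
        exact (cdE_mul_E n i j h1 h2).mk_fst
      · -- i low, j high
        have hj'2 : j - 2 ^ n < 2 ^ n := by omega
        have hix : i ^^^ j = 2 ^ n + (i ^^^ (j - 2 ^ n)) := by
          have h := xor_low_high h1 hj'2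
          rwa [show 2 ^ n + (j - 2 ^ n) = j from by omega] at h
        have hixh : ¬ (i ^^^ j < 2 ^ n) := by omega
        have hixs : (i ^^^ j) - 2 ^ n = i ^^^ (j - 2 ^ n) := by omega
        rw [cdE_low h1, cdE_high h2, cdE_high hixh, hixs, cdMul_mk]
        simp only [cdMul_zero, zero_cdMul, cdConj_zero, sub_zero, zero_sub, zero_add, add_zero]
        rcases cdConj_E_pm n i h1 with hc | hc <;> rw [hc]
        · exact (cdE_mul_E n i (j - 2 ^ n) h1 hj'2).mk_snd
        · rw [cdMul_neg_left]
          exact ((cdE_mul_E n i (j - 2 ^ n) h1 hj'2).neg_left).mk_snd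
      · -- i high, j low
        have hi'2 : i - 2 ^ n < 2 ^ n := by omega
        have hix : i ^^^ j = 2 ^ n + ((i - 2 ^ n) ^^^ j) := by
          have h := xor_high_low hi'2 h2
          rwa [show 2 ^ n + (i - 2 ^ n) = i from by omega] at h
        have hixh : ¬ (i ^^^ j < 2 ^ n) := by omega
        have hixs : (i ^^^ j) - 2 ^ n = (i - 2 ^ n) ^^^ j := by omega
        rw [cdE_high h1, cdE_low h2, cdE_high hixh, hixs, cdMul_mk]
        simp only [cdMul_zero, zero_cdMul, cdConj_zero, sub_zero, zero_sub, zero_add, add_zero]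
        rw [Nat.xor_comm (i - 2 ^ n) j]
        exact (cdE_mul_E n j (i - 2 ^ n) h2 hi'2).mk_snd
      · -- both high
        have hi'2 : i - 2 ^ n < 2 ^ n := by omega
        have hj'2 : j - 2 ^ n < 2 ^ n := by omega
        have hix : i ^^^ j = (i - 2 ^ n) ^^^ (j - 2 ^ n) := by
          have h := xor_high_high hi'2 hj'2
          rwa [show 2 ^ n + (i - 2 ^ n) = i from by omega,
            show 2 ^ n + (j - 2 ^ n) = j from by omega] at h
        have hixl : i ^^^ j < 2 ^ n := by
          rw [hix]; exact Nat.xor_lt_two_pow hi'2 hj'2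
        rw [cdE_high h1, cdE_high h2, cdE_low hixl, hix, cdMul_mk]
        simp only [cdMul_zero, zero_cdMul, cdConj_zero, sub_zero, zero_sub, zero_add, add_zero]
        rcases cdConj_E_pm n (i - 2 ^ n) hi'2 with hc | hc <;> rw [hc]
        · rw [Nat.xor_comm (i - 2 ^ n)]
          have := ((cdE_mul_E n (j - 2 ^ n) (i - 2 ^ n) hj'2 hi'2).mk_fst).neg_left
          erw [cd_neg_mk, neg_zero] at this; exact this
        · rw [cdMul_neg_right, neg_neg, Nat.xor_comm (i - 2 ^ n)]
          exact (cdE_mul_E n (j - 2 ^ n) (i - 2 ^ n) hj'2 hi'2).mk_fst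

lemma cdE_sq : ∀ n i, 0 < i → i < 2 ^ n → cdMul n (cdE n i) (cdE n i) = -cdE n 0
  | 0, i, hpos, hlt => by omega
  | n + 1, i, hpos, hlt => by
      have h0 : (0:ℕ) < 2 ^ n := Nat.pow_pos (a := 2) (n := n) (by norm_num)
      rw [cdE_low h0]
      by_cases h : i < 2 ^ n
      · rw [cdE_low h, cdMul_mk]
        simp only [cdMul_zero, zero_cdMul, cdConj_zero, sub_zero, zero_sub, zero_add, add_zero]
        erw [cdE_sq n i hpos h, cd_neg_mk, neg_zero]
      · rw [show (2:ℕ) ^ (n+1) = 2 ^ n + 2 ^ n by ring] at hlt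
        rw [cdE_high h, cdMul_mk]
        simp only [cdMul_zero, zero_cdMul, cdConj_zero, sub_zero, zero_sub, zero_add, add_zero]
        erw [cd_neg_mk, neg_zero]
        by_cases h' : i - 2 ^ n = 0
        · rw [h', cdE_zero_eq_one, cdConj_one, cdMul_one]
        · rw [cdConj_E n _ h' (by omega), cdMul_neg_right, neg_neg,
            cdE_sq n (i - 2 ^ n) (by omega) (by omega)]

-- parity functional on 5 bits
def parb (b i : ℕ) : Bool :=
  (Nat.testBit (b &&& i) 0).xor ((Nat.testBit (b &&& i) 1).xor ((Nat.testBit (b &&& i) 2).xor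
    ((Nat.testBit (b &&& i) 3).xor (Nat.testBit (b &&& i) 4))))

lemma xor5_regroup (x0 x1 x2 x3 x4 y0 y1 y2 y3 y4 : Bool) :
    (x0.xor y0).xor ((x1.xor y1).xor ((x2.xor y2).xor ((x3.xor y3).xor (x4.xor y4))))
      = (x0.xor (x1.xor (x2.xor (x3.xor x4)))).xor (y0.xor (y1.xor (y2.xor (y3.xor y4)))) := by
  cases x0 <;> cases x1 <;> cases x2 <;> cases x3 <;> cases x4 <;>
    cases y0 <;> cases y1 <;> cases y2 <;> cases y3 <;> cases y4 <;> rfl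

lemma parb_hom (b i j : ℕ) : parb b (i ^^^ j) = (parb b i).xor (parb b j) := by
  simp only [parb, Nat.and_xor_distrib_left, Nat.testBit_xor]
  exact xor5_regroup _ _ _ _ _ _ _ _ _ _

lemma parb_zero_right (b : ℕ) : parb b 0 = false := by
  simp [parb]

lemma parb_zero_left (i : ℕ) : parb 0 i = false := by
  simp [parb]

theorem parb_card : ∀ b : Fin 32, b.val ≠ 0 →
    ((Finset.range 32).filter (fun i => parb b.val i = false)).card = 16 := by decide

theorem parb_inj : ∀ b b' : Fin 32,
    (∀ k : Fin 5, parb b.val (2 ^ k.val) = parb b'.val (2 ^ k.val)) → b = b' := by decide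

theorem nat_decomp : ∀ i : Fin 32,
    i.val = (16 &&& i.val) ^^^ ((8 &&& i.val) ^^^ ((4 &&& i.val) ^^^ ((2 &&& i.val) ^^^ (1 &&& i.val)))) := by
  decide

theorem and_pow_eq : ∀ i : Fin 32, ∀ k : Fin 5,
    (2 ^ k.val &&& i.val) = if i.val.testBit k.val then 2 ^ k.val else 0 := by decide

theorem bits_spec : ∀ b0 b1 b2 b3 b4 : Bool,
    (parb ((cond b0 1 0) + (cond b1 2 0) + (cond b2 4 0) + (cond b3 8 0) + (cond b4 16 0)) 1 = b0)
    ∧ (parb ((cond b0 1 0) + (cond b1 2 0) + (cond b2 4 0) + (cond b3 8 0) + (cond b4 16 0)) 2 = b1)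
    ∧ (parb ((cond b0 1 0) + (cond b1 2 0) + (cond b2 4 0) + (cond b3 8 0) + (cond b4 16 0)) 4 = b2)
    ∧ (parb ((cond b0 1 0) + (cond b1 2 0) + (cond b2 4 0) + (cond b3 8 0) + (cond b4 16 0)) 8 = b3)
    ∧ (parb ((cond b0 1 0) + (cond b1 2 0) + (cond b2 4 0) + (cond b3 8 0) + (cond b4 16 0)) 16 = b4)
    ∧ ((cond b0 1 0) + (cond b1 2 0) + (cond b2 4 0) + (cond b3 8 0) + (cond b4 16 0) < 32) := by
  decide

theorem and_mask_eq : ∀ i : Fin 32,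
    ((16 &&& i.val) = if i.val.testBit 4 then 16 else 0)
    ∧ ((8 &&& i.val) = if i.val.testBit 3 then 8 else 0)
    ∧ ((4 &&& i.val) = if i.val.testBit 2 then 4 else 0)
    ∧ ((2 &&& i.val) = if i.val.testBit 1 then 2 else 0)
    ∧ ((1 &&& i.val) = if i.val.testBit 0 then 1 else 0) := by decide

lemma lt32_pow {i : ℕ} (h : i < 32) : i < 2 ^ 5 := by simpa using h

lemma xor_lt32 {a b : ℕ} (ha : a < 32) (hb : b < 32) : a ^^^ b < 32 := by
  have := Nat.xor_lt_two_pow (lt32_pow ha) (lt32_pow hb)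
  simpa using this

lemma xor_self_cancel (a b : ℕ) : a ^^^ (a ^^^ b) = b := by
  rw [← Nat.xor_assoc, Nat.xor_self, Nat.zero_xor]

lemma xor_cancel_right' (a b : ℕ) : (a ^^^ b) ^^^ b = a := by
  rw [Nat.xor_assoc, Nat.xor_self, Nat.xor_zero]

/-- decomposition of a 5-bit xor-homomorphism -/
lemma hom_decomp {g : ℕ → Bool} (hg : ∀ i j, i < 32 → j < 32 → g (i ^^^ j) = (g i).xor (g j))
    {i : ℕ} (hi : i < 32) :
    g i = (g (16 &&& i)).xor ((g (8 &&& i)).xor ((g (4 &&& i)).xor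
      ((g (2 &&& i)).xor (g (1 &&& i))))) := by
  have b16 : 16 &&& i < 32 := lt_of_le_of_lt Nat.and_le_right hi
  have b8 : 8 &&& i < 32 := lt_of_le_of_lt Nat.and_le_right hi
  have b4 : 4 &&& i < 32 := lt_of_le_of_lt Nat.and_le_right hi
  have b2 : 2 &&& i < 32 := lt_of_le_of_lt Nat.and_le_right hi
  have b1 : 1 &&& i < 32 := lt_of_le_of_lt Nat.and_le_right hi
  have x1 : (2 &&& i) ^^^ (1 &&& i) < 32 := xor_lt32 b2 b1
  have x2 : (4 &&& i) ^^^ ((2 &&& i) ^^^ (1 &&& i)) < 32 := xor_lt32 b4 x1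
  have x3 : (8 &&& i) ^^^ ((4 &&& i) ^^^ ((2 &&& i) ^^^ (1 &&& i))) < 32 := xor_lt32 b8 x2
  have hd := nat_decomp ⟨i, hi⟩
  dsimp only at hd
  conv_lhs => rw [hd]
  rw [hg _ _ b16 x3, hg _ _ b8 x2, hg _ _ b4 x1, hg _ _ b2 b1]

open scoped Classical

-- TT-level lemmas
lemma tt_mul_def (x y : TT) : x * y = cdMul 5 x y := rfl

lemma e_mul_pm {i j : ℕ} (hi : i < 32) (hj : j < 32) :
    e i * e j = e (i ^^^ j) ∨ e i * e j = -e (i ^^^ j) :=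
  cdE_mul_E 5 i j (lt32_pow hi) (lt32_pow hj)

lemma e_sq {i : ℕ} (h0 : 0 < i) (hi : i < 32) : e i * e i = -e 0 :=
  cdE_sq 5 i h0 (lt32_pow hi)

lemma e_zero_eq_one : e 0 = 1 := cdE_zero_eq_one 5

lemma one_mul_tt (x : TT) : 1 * x = x := cdOne_mul 5 x

lemma neg_mul_tt (x y : TT) : (-x) * y = -(x * y) := cdMul_neg_left 5 x y

lemma mul_neg_tt (x y : TT) : x * (-y) = -(x * y) := cdMul_neg_right 5 x y

lemma e_inj' {i j : ℕ} (hi : i < 32) (hj : j < 32) (h : e i = e j) : i = j :=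
  cdE_inj 5 i j (lt32_pow hi) (lt32_pow hj) h

lemma e_ne_neg' (i j : ℕ) : e i ≠ -e j := cdE_ne_neg 5 i j

-- index sets and candidate subloops
def Kb (b : ℕ) : Finset ℕ := (Finset.range 32).filter fun i => parb b i = false

lemma mem_Kb {b i : ℕ} : i ∈ Kb b ↔ i < 32 ∧ parb b i = false := by
  simp [Kb]

noncomputable def pmFinset (S : Finset ℕ) : Finset TT :=
  (S.image e) ∪ (S.image fun i => -e i)

lemma mem_pmFinset {S : Finset ℕ} {x : TT} :
    x ∈ pmFinset S ↔ ∃ i ∈ S, x = e i ∨ x = -e i := by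
  simp only [pmFinset, Finset.mem_union, Finset.mem_image]
  constructor
  · rintro (⟨i, hi, rfl⟩ | ⟨i, hi, rfl⟩)
    · exact ⟨i, hi, Or.inl rfl⟩
    · exact ⟨i, hi, Or.inr rfl⟩
  · rintro ⟨i, hi, rfl | rfl⟩
    · exact Or.inl ⟨i, hi, rfl⟩
    · exact Or.inr ⟨i, hi, rfl⟩

lemma pmFinset_card {S : Finset ℕ} (hS : S ⊆ Finset.range 32) :
    (pmFinset S).card = 2 * S.card := by
  have hinj1 : Set.InjOn e S := by
    intro a ha b hb h
    exact e_inj' (Finset.mem_range.1 (hS ha)) (Finset.mem_range.1 (hS hb)) h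
  have hinj2 : Set.InjOn (fun i => -e i) S := by
    intro a ha b hb h
    exact e_inj' (Finset.mem_range.1 (hS ha)) (Finset.mem_range.1 (hS hb)) (neg_injective h)
  have hdisj : Disjoint (S.image e) (S.image fun i => -e i) := by
    rw [Finset.disjoint_left]
    rintro x hx1 hx2
    obtain ⟨a, _, rfl⟩ := Finset.mem_image.1 hx1
    obtain ⟨c, _, hc⟩ := Finset.mem_image.1 hx2
    exact e_ne_neg' a c hc.symm
  rw [pmFinset, Finset.card_union_of_disjoint hdisj, Finset.card_image_of_injOn hinj1,
    Finset.card_image_of_injOn hinj2]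
  ring

def eSet (b : ℕ) : Set TT := {x | ∃ i ∈ Kb b, x = e i ∨ x = -e i}

lemma eSet_coe (b : ℕ) : eSet b = ↑(pmFinset (Kb b)) := by
  ext x
  simp only [eSet, Set.mem_setOf_eq, Finset.coe_union, Finset.mem_coe, mem_pmFinset]

lemma e_mem_eSet {b i : ℕ} (hi : i < 32) : e i ∈ eSet b ↔ parb b i = false := by
  constructor
  · rintro ⟨j, hj, h | h⟩
    · obtain ⟨hj32, hjp⟩ := mem_Kb.1 hj
      rwa [e_inj' hi hj32 h]
    · exact absurd h (e_ne_neg' i j)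
  · intro h
    exact ⟨i, mem_Kb.2 ⟨hi, h⟩, Or.inl rfl⟩

lemma Kb_subset (b : ℕ) : Kb b ⊆ Finset.range 32 := Finset.filter_subset _ _

lemma Kb_card {b : ℕ} (hb : 0 < b) (hb32 : b < 32) : (Kb b).card = 16 :=
  parb_card ⟨b, hb32⟩ (show b ≠ 0 by omega)

lemma eSet_ncard {b : ℕ} (hb : 0 < b) (hb32 : b < 32) : (eSet b).ncard = 32 := by
  rw [eSet_coe, Set.ncard_coe_finset, pmFinset_card (Kb_subset b), Kb_card hb hb32]

lemma eSet_subloop {b : ℕ} (hb : 0 < b) (hb32 : b < 32) : IsSubloop (eSet b) := by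
  refine ⟨?_, ⟨e 0, ⟨0, mem_Kb.2 ⟨by norm_num, parb_zero_right b⟩, Or.inl rfl⟩⟩, ?_⟩
  · rintro x ⟨i, hi, hx⟩
    exact ⟨i, (mem_Kb.1 hi).1, hx⟩
  · rintro x ⟨i, hi, hx⟩ y ⟨j, hj, hy⟩
    obtain ⟨hi32, hip⟩ := mem_Kb.1 hi
    obtain ⟨hj32, hjp⟩ := mem_Kb.1 hj
    have hk : i ^^^ j ∈ Kb b := mem_Kb.2 ⟨xor_lt32 hi32 hj32,
      by rw [parb_hom, hip, hjp]; rfl⟩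
    have hpm : x * y = e (i ^^^ j) ∨ x * y = -e (i ^^^ j) := by
      rcases hx with rfl | rfl <;> rcases hy with rfl | rfl
      · exact e_mul_pm hi32 hj32
      · rw [mul_neg_tt]
        rcases e_mul_pm hi32 hj32 with h | h
        · rw [h]; exact Or.inr rfl
        · rw [h, neg_neg]; exact Or.inl rfl
      · rw [neg_mul_tt]
        rcases e_mul_pm hi32 hj32 with h | h
        · rw [h]; exact Or.inr rfl
        · rw [h, neg_neg]; exact Or.inl rfl
      · rw [neg_mul_tt, mul_neg_tt, neg_neg]
        exact e_mul_pm hi32 hj32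
    exact ⟨i ^^^ j, hk, hpm⟩

lemma TL_finite : TL.Finite := by
  apply Set.Finite.ofFinset (pmFinset (Finset.range 32))
  intro x
  rw [mem_pmFinset]
  constructor
  · rintro ⟨i, hi, hx⟩
    exact ⟨i, Finset.mem_range.1 hi, hx⟩
  · rintro ⟨i, hi, hx⟩
    exact ⟨i, Finset.mem_range.2 hi, hx⟩

/-- There are exactly 31 subloops of `T_L` of cardinality 32. -/
theorem stmt2 : {N : Set TT | IsSubloop N ∧ N.ncard = 32}.ncard = 31 := by
  classical
  have key : {N : Set TT | IsSubloop N ∧ N.ncard = 32} = ↑((Finset.Ico 1 32).image eSet) := by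
    ext N
    simp only [Set.mem_setOf_eq, Finset.coe_image, Set.mem_image, Finset.mem_coe,
      Finset.mem_Ico]
    constructor
    · rintro ⟨⟨hTL, hne, hmul⟩, hcard⟩
      have hshape : ∀ x ∈ N, ∃ i, i < 32 ∧ (x = e i ∨ x = -e i) := by
        intro x hx
        obtain ⟨i, hi, hx'⟩ := hTL hx
        exact ⟨i, hi, hx'⟩
      have hfin : N.Finite := TL_finite.subset hTL
      have hbig : ∃ i, 0 < i ∧ i < 32 ∧ (e i ∈ N ∨ -e i ∈ N) := by
        by_contra hcon
        push_neg at hcon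
        have hsub2 : N ⊆ {e 0, -e 0} := by
          intro x hx
          obtain ⟨i, hi, hx'⟩ := hshape x hx
          rcases Nat.eq_zero_or_pos i with rfl | hpos
          · rcases hx' with rfl | rfl
            · exact Set.mem_insert _ _
            · exact Set.mem_insert_of_mem _ rfl
          · exfalso
            rcases hx' with rfl | rfl
            · exact (hcon i hpos hi).1 hx
            · exact (hcon i hpos hi).2 hx
        have hle : N.ncard ≤ 2 := by
          have hp : ({e 0, -e 0} : Set TT).Finite :=
            (Set.finite_singleton (-e 0)).insert (e 0)
          calc N.ncard ≤ ({e 0, -e 0} : Set TT).ncard := Set.ncard_le_ncard hsub2 hp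
          _ ≤ 2 := by
              refine le_trans (Set.ncard_insert_le _ _) ?_
              simp [Set.ncard_singleton]
        omega
      obtain ⟨i0, hi0pos, hi032, hi0mem⟩ := hbig
      have hneg1 : -e 0 ∈ N := by
        rcases hi0mem with hm | hm
        · have := hmul _ hm _ hm
          rwa [e_sq hi0pos hi032] at this
        · have := hmul _ hm _ hm
          rwa [neg_mul_tt, mul_neg_tt, neg_neg, e_sq hi0pos hi032] at this
      have h1 : e 0 ∈ N := by
        have h := hmul _ hneg1 _ hneg1
        rw [neg_mul_tt, mul_neg_tt, neg_neg, e_zero_eq_one, one_mul_tt] at h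
        rwa [e_zero_eq_one]
      have hnegmem : ∀ x ∈ N, -x ∈ N := by
        intro x hx
        have := hmul _ hneg1 _ hx
        rwa [neg_mul_tt, e_zero_eq_one, one_mul_tt] at this
      set S : Finset ℕ := (Finset.range 32).filter (fun i => e i ∈ N) with hSdef
      have hSsub : S ⊆ Finset.range 32 := Finset.filter_subset _ _
      have hSmem : ∀ i, i ∈ S ↔ (i < 32 ∧ e i ∈ N) := by
        intro i; simp [hSdef]
      have hNS : N = ↑(pmFinset S) := by
        ext x
        rw [Finset.mem_coe, mem_pmFinset]
        constructor
        · intro hx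
          obtain ⟨i, hi, hx'⟩ := hshape x hx
          refine ⟨i, (hSmem i).2 ⟨hi, ?_⟩, hx'⟩
          rcases hx' with rfl | rfl
          · exact hx
          · have := hnegmem _ hx; rwa [neg_neg] at this
        · rintro ⟨i, hi, rfl | rfl⟩
          · exact ((hSmem i).1 hi).2
          · exact hnegmem _ ((hSmem i).1 hi).2
      have hScard : S.card = 16 := by
        have h2 : N.ncard = 2 * S.card := by
          rw [hNS, Set.ncard_coe_finset, pmFinset_card hSsub]
        omega
      have h0S : 0 ∈ S := (hSmem 0).2 ⟨by norm_num, h1⟩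
      have hSxor : ∀ i ∈ S, ∀ j ∈ S, i ^^^ j ∈ S := by
        intro i hi j hj
        obtain ⟨hi32, hiN⟩ := (hSmem i).1 hi
        obtain ⟨hj32, hjN⟩ := (hSmem j).1 hj
        refine (hSmem _).2 ⟨xor_lt32 hi32 hj32, ?_⟩
        have hm := hmul _ hiN _ hjN
        rcases e_mul_pm hi32 hj32 with h | h
        · rwa [h] at hm
        · rw [h] at hm
          have := hnegmem _ hm
          rwa [neg_neg] at this
      have hcoset : ∀ i j, i < 32 → j < 32 → i ∉ S → j ∉ S → i ^^^ j ∈ S := by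
        intro i j hi32 hj32 hiS hjS
        have himg : S.image (fun x => i ^^^ x) ⊆ (Finset.range 32) \ S := by
          intro y hy
          obtain ⟨x, hx, rfl⟩ := Finset.mem_image.1 hy
          have hx32 := Finset.mem_range.1 (hSsub hx)
          rw [Finset.mem_sdiff]
          refine ⟨Finset.mem_range.2 (xor_lt32 hi32 hx32), fun hmem => hiS ?_⟩
          have := hSxor _ hmem _ hx
          rwa [xor_cancel_right'] at this
        have hCcard : ((Finset.range 32) \ S).card = 16 := by
          rw [Finset.card_sdiff_of_subset hSsub, Finset.card_range, hScard]
        have himgcard : (S.image (fun x => i ^^^ x)).card = 16 := by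
          rw [Finset.card_image_of_injOn, hScard]
          intro a _ c _ hac
          simp only at hac
          have h2 : i ^^^ (i ^^^ a) = i ^^^ (i ^^^ c) := by rw [hac]
          rwa [xor_self_cancel, xor_self_cancel] at h2
        have heq : S.image (fun x => i ^^^ x) = (Finset.range 32) \ S :=
          Finset.eq_of_subset_of_card_le himg (by omega)
        have hjC : j ∈ (Finset.range 32) \ S :=
          Finset.mem_sdiff.2 ⟨Finset.mem_range.2 hj32, hjS⟩
        rw [← heq] at hjC
        obtain ⟨x, hx, hxe⟩ := Finset.mem_image.1 hjC
        rw [← hxe, xor_self_cancel]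
        exact hx
      set f : ℕ → Bool := fun i => decide (i ∉ S) with hfdef
      have hfS : ∀ i, f i = false ↔ i ∈ S := by
        intro i; simp [hfdef]
      have hf_hom : ∀ i j, i < 32 → j < 32 → f (i ^^^ j) = (f i).xor (f j) := by
        intro i j hi hj
        by_cases hiS : i ∈ S <;> by_cases hjS : j ∈ S
        · have := hSxor i hiS j hjS
          simp [hfdef, hiS, hjS, this]
        · have hxj : i ^^^ j ∉ S := by
            intro hmem
            exact hjS (by have := hSxor i hiS _ hmem; rwa [xor_self_cancel] at this)
          simp [hfdef, hiS, hjS, hxj]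
        · have hxj : i ^^^ j ∉ S := by
            intro hmem
            exact hiS (by have := hSxor _ hmem j hjS; rwa [xor_cancel_right'] at this)
          simp [hfdef, hiS, hjS, hxj]
        · have := hcoset i j hi hj hiS hjS
          simp [hfdef, hiS, hjS, this]
      have hf0 : f 0 = false := (hfS 0).2 h0S
      obtain ⟨hp1, hp2, hp4, hp8, hp16, hblt⟩ := bits_spec (f 1) (f 2) (f 4) (f 8) (f 16)
      set b : ℕ := (cond (f 1) 1 0) + (cond (f 2) 2 0) + (cond (f 4) 4 0) + (cond (f 8) 8 0)
        + (cond (f 16) 16 0) with hbdef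
      have hfp : ∀ i, i < 32 → f i = parb b i := by
        intro i hi
        rw [hom_decomp hf_hom hi, hom_decomp (fun i j _ _ => parb_hom b i j) hi]
        obtain ⟨m16, m8, m4, m2, m1⟩ := and_mask_eq ⟨i, hi⟩
        dsimp only at m16 m8 m4 m2 m1
        rw [m16, m8, m4, m2, m1]
        cases i.testBit 4 <;> cases i.testBit 3 <;> cases i.testBit 2 <;> cases i.testBit 1
          <;> cases i.testBit 0 <;>
          simp [hf0, parb_zero_right, hp1, hp2, hp4, hp8, hp16]
      have hb0 : 0 < b := by
        rcases Nat.eq_zero_or_pos b with hb | hb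
        · exfalso
          have hall : (Finset.range 32) ⊆ S := by
            intro i hi
            have h2 := hfp i (Finset.mem_range.1 hi)
            rw [hb, parb_zero_left] at h2
            exact (hfS i).1 h2
          have := Finset.card_le_card hall
          rw [Finset.card_range, hScard] at this
          omega
        · exact hb
      refine ⟨b, ⟨hb0, hblt⟩, ?_⟩
      have hKS : Kb b = S := by
        ext i
        rw [mem_Kb]
        constructor
        · rintro ⟨hi32, hip⟩
          exact (hfS i).1 (by rw [hfp i hi32]; exact hip)
        · intro hiS
          have hi32 := Finset.mem_range.1 (hSsub hiS)
          exact ⟨hi32, by rw [← hfp i hi32]; exact (hfS i).2 hiS⟩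
      rw [eSet_coe, hKS]
      exact hNS.symm
    · rintro ⟨b, ⟨hb1, hb32⟩, rfl⟩
      exact ⟨eSet_subloop (by omega) hb32, eSet_ncard (by omega) hb32⟩
  rw [key, Set.ncard_coe_finset]
  rw [Finset.card_image_of_injOn]
  · simp [Nat.card_Ico]
  · intro b hb b' hb' h
    simp only [Finset.coe_Ico, Set.mem_Ico] at hb hb'
    have hagree : ∀ v, v < 32 → parb b v = parb b' v := by
      intro v hv
      have h1 := e_mem_eSet (b := b) hv
      have h2 := e_mem_eSet (b := b') hv
      rw [h] at h1
      cases hbv : parb b v <;> cases hbv' : parb b' v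
      · rfl
      · exact absurd (hbv' ▸ (h2.1 (h1.2 hbv))) (by simp)
      · exact absurd (hbv ▸ (h1.1 (h2.2 hbv'))) (by simp)
      · rfl
    have hfin : (⟨b, hb.2⟩ : Fin 32) = ⟨b', hb'.2⟩ := by
      apply parb_inj
      intro k
      have hk : (2:ℕ) ^ k.val < 32 := by
        fin_cases k <;> norm_num
      exact hagree _ hk
    exact congrArg Fin.val hfin
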